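/- Let X be a compact Hausdorff space. Then δ(X) is a strong deformation retract of I_f(X): there exists a continuous map h : I_f(X) × [0,1] → I_f(X) such that h(μ,0) = μ for every μ ∈ I_f(X), h(μ,1) = r(μ) ∈ δ(X) for every μ ∈ I_f(X), and h(δ_x, t) = δ_x for every x ∈ X and every t ∈ [0,1], where r : I_f(X) → δ(X) sends μ = ⊕_{i=1}^n λ_i ⊙ δ_{x_i} to δ_{x_{i_0}} with i_0 the unique index such that λ_{i_0} = 0. -/

import Mathlib

open Real Set Topology

/-- The Dirac measure `δ_x` on `X`, as a functional on `C(X, ℝ)`: `δ_x(φ) = φ(x)`. -/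
def dirac (X : Type*) [TopologicalSpace X] (x : X) : C(X, ℝ) → ℝ := fun φ => φ x

/-- The max-plus combination `⊕_{i=1}^n λ_i ⊙ δ_{x_i}`, i.e. the functional
`φ ↦ max_{1 ≤ i ≤ n} (λ_i + φ(x_i))`. -/
noncomputable def maxPlus {X : Type*} [TopologicalSpace X] {n : ℕ}
    (lam : Fin n → ℝ) (x : Fin n → X) : C(X, ℝ) → ℝ :=
  fun φ => ⨆ i, (lam i + φ (x i))

/-- `μ : C(X, ℝ) → ℝ` is an idempotent probability measure:
(1) `μ(c_λ) = λ` for constant functions; (2) `μ(λ + φ) = λ + μ(φ)`;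
(3) `μ(max(φ, ψ)) = max(μ(φ), μ(ψ))`. -/
def IsIPM {X : Type*} [TopologicalSpace X] (μ : C(X, ℝ) → ℝ) : Prop :=
  (∀ c : ℝ, μ (ContinuousMap.const X c) = c) ∧
  (∀ (c : ℝ) (φ : C(X, ℝ)), μ (ContinuousMap.const X c + φ) = c + μ φ) ∧
  (∀ φ ψ : C(X, ℝ), μ (φ ⊔ ψ) = max (μ φ) (μ ψ))

/-- Membership in `I_ω(X)`: idempotent probability measures with finite support, i.e.
`μ = ⊕_{i=1}^n λ_i ⊙ δ_{x_i}` with `x_i` pairwise distinct, `λ_i ≤ 0` and `max_i λ_i = 0`. -/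
def IsFS {X : Type*} [TopologicalSpace X] (μ : C(X, ℝ) → ℝ) : Prop :=
  ∃ n : ℕ, 0 < n ∧ ∃ (x : Fin n → X) (lam : Fin n → ℝ),
    Function.Injective x ∧ (∀ i, lam i ≤ 0) ∧ (∃ i, lam i = 0) ∧ μ = maxPlus lam x

/-- Membership in `I_f(X)`: `μ = ⊕_{i=1}^n λ_i ⊙ δ_{x_i}` with `x_i` pairwise distinct,
a unique index `i₀` with `λ_{i₀} = 0`, and `λ_i ≤ -ln(n+1)` for every `i ≠ i₀`. -/
def IsIf {X : Type*} [TopologicalSpace X] (μ : C(X, ℝ) → ℝ) : Prop :=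
  ∃ n : ℕ, 0 < n ∧ ∃ (x : Fin n → X) (lam : Fin n → ℝ) (i0 : Fin n),
    Function.Injective x ∧ lam i0 = 0 ∧
    (∀ i, i ≠ i0 → lam i ≤ -Real.log (n + 1)) ∧ μ = maxPlus lam x

section Aux
variable {X : Type*} [TopologicalSpace X]

lemma maxPlus_le {n : ℕ} (hn : 0 < n) (lam : Fin n → ℝ) (x : Fin n → X) (φ : C(X, ℝ)) {M : ℝ}
    (hM : ∀ i, lam i + φ (x i) ≤ M) : maxPlus lam x φ ≤ M := by
  have : Nonempty (Fin n) := ⟨⟨0, hn⟩⟩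
  exact ciSup_le hM

lemma le_maxPlus {n : ℕ} (lam : Fin n → ℝ) (x : Fin n → X) (φ : C(X, ℝ)) (i : Fin n) :
    lam i + φ (x i) ≤ maxPlus lam x φ := by
  simp only [maxPlus]
  exact le_ciSup (f := fun i => lam i + φ (x i)) (Set.Finite.bddAbove (Set.finite_range _)) i

lemma maxPlus_smul_div {n : ℕ} (hn : 0 < n) (lam : Fin n → ℝ) (x : Fin n → X) (φ : C(X, ℝ))
    {a : ℝ} (ha : 0 < a) :
    maxPlus lam x (a • φ) / a = maxPlus (fun i => lam i / a) x φ := by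
  apply le_antisymm
  · rw [div_le_iff₀ ha]
    apply maxPlus_le hn
    intro i
    have h1 := le_maxPlus (fun i => lam i / a) x φ i
    have h2 : (a • φ) (x i) = a * φ (x i) := by simp
    rw [h2]
    have h3 : (lam i / a) * a = lam i := by field_simp
    nlinarith [mul_le_mul_of_nonneg_right h1 ha.le]
  · apply maxPlus_le hn
    intro i
    rw [le_div_iff₀ ha]
    have h1 := le_maxPlus lam x (a • φ) i
    have h2 : (a • φ) (x i) = a * φ (x i) := by simp
    have h3 : (lam i / a) * a = lam i := by field_simp
    nlinarith

/-- Key lemma: if all non-top coefficients are ≤ -(2‖φ‖+1), the maxPlus value is φ(x i0). -/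
lemma maxPlus_eq_top {n : ℕ} [CompactSpace X] (hn : 0 < n) (x : Fin n → X) (lam : Fin n → ℝ)
    (i0 : Fin n) (h0 : lam i0 = 0) (φ : C(X, ℝ))
    (hb : ∀ i, i ≠ i0 → lam i ≤ -(2 * ‖φ‖ + 1)) :
    maxPlus lam x φ = φ (x i0) := by
  apply le_antisymm
  · apply maxPlus_le hn
    intro i
    by_cases hi : i = i0
    · subst hi; rw [h0]; linarith
    · have h1 := hb i hi
      have h2 : |φ (x i)| ≤ ‖φ‖ := by
        simpa using φ.norm_coe_le_norm (x i)
      have h3 : |φ (x i0)| ≤ ‖φ‖ := by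
        simpa using φ.norm_coe_le_norm (x i0)
      have := abs_le.mp h2
      have := abs_le.mp h3
      linarith
  · have := le_maxPlus lam x φ i0
    rw [h0] at this; linarith

/-- Lipschitz property of maxPlus functionals. -/
lemma maxPlus_lip {n : ℕ} [CompactSpace X] (hn : 0 < n) (lam : Fin n → ℝ) (x : Fin n → X)
    (φ ψ : C(X, ℝ)) : |maxPlus lam x φ - maxPlus lam x ψ| ≤ ‖φ - ψ‖ := by
  have key : ∀ φ ψ : C(X, ℝ), maxPlus lam x φ - maxPlus lam x ψ ≤ ‖φ - ψ‖ := by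
    intro φ ψ
    rw [sub_le_iff_le_add]
    apply maxPlus_le hn
    intro i
    have h1 := le_maxPlus lam x ψ i
    have h2 : |(φ - ψ) (x i)| ≤ ‖φ - ψ‖ := by
      simpa using (φ - ψ).norm_coe_le_norm (x i)
    have h3 : (φ - ψ) (x i) = φ (x i) - ψ (x i) := by simp
    rw [h3] at h2
    have := abs_le.mp h2
    linarith
  rw [abs_sub_le_iff]
  refine ⟨key φ ψ, ?_⟩
  have := key ψ φ
  rwa [show ‖ψ - φ‖ = ‖φ - ψ‖ from norm_sub_rev ψ φ] at this

variable [CompactSpace X]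

/-- The threshold scale associated with a test function. -/
noncomputable def sEps (φ : C(X, ℝ)) : ℝ := Real.log 2 / (2 * ‖φ‖ + 1)

lemma sEps_pos (φ : C(X, ℝ)) : 0 < sEps φ := by
  apply div_pos (Real.log_pos one_lt_two)
  nlinarith [norm_nonneg φ]

lemma sEps_le_one (φ : C(X, ℝ)) : sEps φ ≤ 1 := by
  rw [sEps, div_le_one (by nlinarith [norm_nonneg φ])]
  nlinarith [Real.log_le_sub_one_of_pos (two_pos (α := ℝ)), norm_nonneg φ]

/-- The scale used by the homotopy at time `t`, test function `φ`. -/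
noncomputable def ccf (φ : C(X, ℝ)) (t : unitInterval) : ℝ := max (1 - t.1) (sEps φ)

lemma ccf_pos (φ : C(X, ℝ)) (t : unitInterval) : 0 < ccf φ t :=
  lt_of_lt_of_le (sEps_pos φ) (le_max_right _ _)

lemma ccf_le_one (φ : C(X, ℝ)) (t : unitInterval) : ccf φ t ≤ 1 :=
  max_le (by have := t.2.1; linarith) (sEps_le_one φ)

/-- Core computation: once the scale is below the threshold, the rescaled measure is Dirac. -/
lemma core {n : ℕ} (hn : 0 < n) (x : Fin n → X) (lam : Fin n → ℝ) (i0 : Fin n)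
    (h0 : lam i0 = 0) (hb : ∀ i, i ≠ i0 → lam i ≤ -Real.log (n + 1)) (φ : C(X, ℝ))
    {a : ℝ} (ha : 0 < a) (ha2 : a ≤ sEps φ) :
    maxPlus (fun i => lam i / a) x φ = φ (x i0) := by
  apply maxPlus_eq_top hn x _ i0 (by rw [h0]; simp) φ
  intro i hi
  have hl : lam i ≤ -Real.log (n + 1) := hb i hi
  have hlog2 : Real.log 2 ≤ Real.log (n + 1) := by
    apply Real.log_le_log (by norm_num)
    have : (1 : ℝ) ≤ n := by exact_mod_cast hn
    linarith
  have hden : (0 : ℝ) < 2 * ‖φ‖ + 1 := by nlinarith [norm_nonneg φ]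
  have ha3 : a * (2 * ‖φ‖ + 1) ≤ Real.log 2 := by
    rw [← le_div_iff₀ hden]; exact ha2
  rw [div_le_iff₀ ha]
  nlinarith

/-- The homotopy. -/
noncomputable def hmap (μ : {μ : C(X, ℝ) → ℝ // IsIf μ}) (t : unitInterval)
    (φ : C(X, ℝ)) : ℝ := μ.1 (ccf φ t • φ) / ccf φ t

lemma hmap_isIf (μ : {μ : C(X, ℝ) → ℝ // IsIf μ}) (t : unitInterval) : IsIf (hmap μ t) := by
  obtain ⟨n, hn, x, lam, i0, hinj, h0, hb, hrep⟩ := μ.2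
  rcases lt_or_eq_of_le t.2.2 with ht | ht
  · -- t < 1
    set a : ℝ := 1 - t.1 with hadef
    have ha : 0 < a := by simp only [hadef]; linarith
    have ha1 : a ≤ 1 := by have := t.2.1; simp only [hadef]; linarith
    have claim : hmap μ t = maxPlus (fun i => lam i / a) x := by
      funext φ
      have hcpos := ccf_pos φ t
      have hrw : hmap μ t φ = maxPlus (fun i => lam i / ccf φ t) x φ := by
        simp only [hmap, hrep]
        exact maxPlus_smul_div hn lam x φ hcpos
      rcases le_total (sEps φ) a with hca | hca
      · have : ccf φ t = a := max_eq_left hca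
        rw [hrw, this]
      · have hceq : ccf φ t = sEps φ := max_eq_right hca
        rw [hrw, hceq, core hn x lam i0 h0 hb φ (sEps_pos φ) le_rfl,
          core hn x lam i0 h0 hb φ ha hca]
    refine ⟨n, hn, x, fun i => lam i / a, i0, hinj, by simp [h0], ?_, claim⟩
    intro i hi
    have hl := hb i hi
    have hlog : 0 ≤ Real.log (n + 1) := Real.log_nonneg (by
      have : (1 : ℝ) ≤ n := by exact_mod_cast hn
      linarith)
    rw [div_le_iff₀ ha]
    nlinarith
  · -- t = 1
    have claim : hmap μ t = fun φ => φ (x i0) := by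
      funext φ
      have hceq : ccf φ t = sEps φ := by
        simp only [ccf, ht, sub_self]
        exact max_eq_right (sEps_pos φ).le
      simp only [hmap, hrep, hceq]
      rw [maxPlus_smul_div hn lam x φ (sEps_pos φ),
        core hn x lam i0 h0 hb φ (sEps_pos φ) le_rfl]
    rw [claim]
    refine ⟨1, one_pos, fun _ => x i0, fun _ => 0, 0,
      fun a b _ => Subsingleton.elim a b, rfl,
      fun i hi => absurd (Subsingleton.elim i 0) hi, ?_⟩
    funext φ
    simp [maxPlus, ciSup_const]

end Aux

/-- `δ(X)` is a strong deformation retract of `I_f(X)`: there is a continuous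
`h : I_f(X) × [0,1] → I_f(X)` with `h(μ,0) = μ`, `h(μ,1) = r(μ) ∈ δ(X)` (where `r` sends
`μ = ⊕_{i=1}^n λ_i ⊙ δ_{x_i}` to `δ_{x_{i₀}}`, `i₀` the unique index with `λ_{i₀} = 0`),
and `h(δ_x, t) = δ_x` for all `x ∈ X`, `t ∈ [0,1]`. -/
theorem stmt9 {X : Type*} [TopologicalSpace X] [CompactSpace X] [T2Space X] :
    ∃ h : {μ : C(X, ℝ) → ℝ // IsIf μ} → unitInterval → C(X, ℝ) → ℝ,
      Continuous (fun p : {μ : C(X, ℝ) → ℝ // IsIf μ} × unitInterval => h p.1 p.2) ∧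
      (∀ μ t, IsIf (h μ t)) ∧
      (∀ μ, h μ 0 = μ.1) ∧
      (∀ (n : ℕ), 0 < n → ∀ (x : Fin n → X) (lam : Fin n → ℝ) (i0 : Fin n),
        Function.Injective x → lam i0 = 0 →
        (∀ i, i ≠ i0 → lam i ≤ -Real.log (n + 1)) →
        ∀ hμ : IsIf (maxPlus lam x), h ⟨maxPlus lam x, hμ⟩ 1 = dirac X (x i0)) ∧
      (∀ (x : X) (hx : IsIf (dirac X x)) (t : unitInterval),
        h ⟨dirac X x, hx⟩ t = dirac X x) := by
  refine ⟨hmap, ?_, hmap_isIf, ?_, ?_, ?_⟩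
  · -- continuity
    apply continuous_pi
    intro φ
    have hc : Continuous fun p : {μ : C(X, ℝ) → ℝ // IsIf μ} × unitInterval => ccf φ p.2 := by
      apply Continuous.max
      · exact continuous_const.sub (continuous_subtype_val.comp continuous_snd)
      · exact continuous_const
    refine Continuous.div ?_ hc (fun p => (ccf_pos φ p.2).ne')
    rw [continuous_iff_continuousAt]
    intro p0
    set ψ0 : C(X, ℝ) := ccf φ p0.2 • φ with hψ0
    have heval : Continuous fun p : {μ : C(X, ℝ) → ℝ // IsIf μ} × unitInterval =>
        p.1.1 ψ0 := (continuous_apply ψ0).comp (continuous_subtype_val.comp continuous_fst)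
    have hg : Continuous fun p : {μ : C(X, ℝ) → ℝ // IsIf μ} × unitInterval =>
        |ccf φ p.2 - ccf φ p0.2| * ‖φ‖ + |p.1.1 ψ0 - p0.1.1 ψ0| :=
      (((hc.sub continuous_const).abs).mul continuous_const).add
        ((heval.sub continuous_const).abs)
    have hg0 : Filter.Tendsto (fun p : {μ : C(X, ℝ) → ℝ // IsIf μ} × unitInterval =>
        |ccf φ p.2 - ccf φ p0.2| * ‖φ‖ + |p.1.1 ψ0 - p0.1.1 ψ0|) (nhds p0) (nhds 0) := by
      have := hg.tendsto p0
      simpa using this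
    have hsq : Filter.Tendsto (fun p : {μ : C(X, ℝ) → ℝ // IsIf μ} × unitInterval =>
        p.1.1 (ccf φ p.2 • φ) - p0.1.1 ψ0) (nhds p0) (nhds 0) := by
      apply squeeze_zero_norm _ hg0
      intro p
      obtain ⟨n, hn, x, lam, i0, hinj, h0, hb, hrep⟩ := p.1.2
      have tri : |p.1.1 (ccf φ p.2 • φ) - p0.1.1 ψ0| ≤
          |p.1.1 (ccf φ p.2 • φ) - p.1.1 ψ0| + |p.1.1 ψ0 - p0.1.1 ψ0| :=
        abs_sub_le _ _ _
      have lip : |p.1.1 (ccf φ p.2 • φ) - p.1.1 ψ0| ≤ |ccf φ p.2 - ccf φ p0.2| * ‖φ‖ := by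
        rw [hrep]
        have h1 := maxPlus_lip hn lam x (ccf φ p.2 • φ) ψ0
        have h2 : ccf φ p.2 • φ - ψ0 = (ccf φ p.2 - ccf φ p0.2) • φ := by
          rw [hψ0, sub_smul]
        rw [h2] at h1
        calc |maxPlus lam x (ccf φ p.2 • φ) - maxPlus lam x ψ0|
            ≤ ‖(ccf φ p.2 - ccf φ p0.2) • φ‖ := h1
          _ = |ccf φ p.2 - ccf φ p0.2| * ‖φ‖ := norm_smul _ φ
      calc ‖p.1.1 (ccf φ p.2 • φ) - p0.1.1 ψ0‖
          = |p.1.1 (ccf φ p.2 • φ) - p0.1.1 ψ0| := rfl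
        _ ≤ |p.1.1 (ccf φ p.2 • φ) - p.1.1 ψ0| + |p.1.1 ψ0 - p0.1.1 ψ0| := tri
        _ ≤ |ccf φ p.2 - ccf φ p0.2| * ‖φ‖ + |p.1.1 ψ0 - p0.1.1 ψ0| := by
            exact add_le_add lip le_rfl
    have : Filter.Tendsto (fun p : {μ : C(X, ℝ) → ℝ // IsIf μ} × unitInterval =>
        p.1.1 (ccf φ p.2 • φ)) (nhds p0) (nhds (p0.1.1 ψ0)) := by
      have := hsq.add_const (p0.1.1 ψ0)
      simpa using this
    exact this
  · -- h μ 0 = μ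
    intro μ
    funext φ
    have hc : ccf φ (0 : unitInterval) = 1 := by
      simp only [ccf]
      rw [show ((0 : unitInterval) : ℝ) = 0 from rfl, sub_zero]
      exact max_eq_left (sEps_le_one φ)
    simp [hmap, hc]
  · -- h μ 1 = dirac at the top point
    intro n hn x lam i0 hinj h0 hb hμ
    funext φ
    have hc : ccf φ (1 : unitInterval) = sEps φ := by
      simp only [ccf]
      rw [show ((1 : unitInterval) : ℝ) = 1 from rfl, sub_self]
      exact max_eq_right (sEps_pos φ).le
    simp only [hmap, hc, dirac]
    rw [maxPlus_smul_div hn lam x φ (sEps_pos φ),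
      core hn x lam i0 h0 hb φ (sEps_pos φ) le_rfl]
  · -- h (δ_x) t = δ_x
    intro x hx t
    funext φ
    have hc := ccf_pos φ t
    simp only [hmap, dirac]
    have : (ccf φ t • φ) x = ccf φ t * φ x := by simp
    rw [this, mul_div_cancel_left₀ _ hc.ne']
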